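/- Let d ≥ 2, let A = (a_0,…,a_{d−1}) be a d-tuple of points in general position in ℝ², and let f be a continuous real-valued function on the convex hull of {a_0,…,a_{d−1}}. Define H(x) := Σ_{0≤s<t≤d−1} Q_{st}(x) · ∫_0^1 f(a_s + w(a_t − a_s)) dw. Then H is a polynomial of degree at most d−2 on ℝ², and for all 0 ≤ u < v ≤ d−1, ∫_0^1 H(a_u + w(a_v − a_u)) dw = ∫_0^1 f(a_u + w(a_v − a_u)) dw; that is, H is the Hakopian interpolation polynomial of f at A. -/

import Mathlib

open Finset

/-- Euclidean scalar product on ℝ² ≅ ℂ. -/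
noncomputable def inner2 (x y : ℂ) : ℝ := x.re * y.re + x.im * y.im

/-- The univariate polynomial h_{st} associated to a tuple `a` of points of ℝ² ≅ ℂ:
`h_{st}(w) = ∏_{m=0, m≠s}^{d−1} (w − ⟨(a_s−a_t)^⊥, a_m⟩)`, where `x^⊥ = i·x`. -/
noncomputable def hPoly (d s t : ℕ) (a : ℕ → ℂ) : ℝ → ℝ :=
  fun w => ∏ m ∈ (Finset.range d).erase s, (w - inner2 (Complex.I * (a s - a t)) (a m))

/-- The points `a 0, …, a (d-1)` are in general position: no three of them are collinear. -/
def GenPos (d : ℕ) (a : ℕ → ℂ) : Prop :=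
  ∀ i j k, i < d → j < d → k < d → i ≠ j → j ≠ k → i ≠ k →
    ¬ Collinear ℝ ({a i, a j, a k} : Set ℂ)


/-- The polynomial `Q_{st}(x) = h′_{st}(⟨(a_s−a_t)^⊥, x⟩) / h′_{st}(⟨(a_s−a_t)^⊥, a_s⟩)`. -/
noncomputable def Qst (d s t : ℕ) (a : ℕ → ℂ) (x : ℂ) : ℝ :=
  deriv (hPoly d s t a) (inner2 (Complex.I * (a s - a t)) x) /
    deriv (hPoly d s t a) (inner2 (Complex.I * (a s - a t)) (a s))

section AuxStmt4
open Polynomial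

noncomputable def pP (d s t : ℕ) (a : ℕ → ℂ) : Polynomial ℝ :=
  ∏ m ∈ (Finset.range d).erase s, (X - C (inner2 (Complex.I * (a s - a t)) (a m)))

lemma hPoly_eq (d s t : ℕ) (a : ℕ → ℂ) :
    hPoly d s t a = fun w => (pP d s t a).eval w := by
  funext w; simp [hPoly, pP, eval_prod]

lemma deriv_hPoly (d s t : ℕ) (a : ℕ → ℂ) (w : ℝ) :
    deriv (hPoly d s t a) w = (pP d s t a).derivative.eval w := by
  rw [hPoly_eq]; exact Polynomial.deriv _

lemma inner2_affine (v x y : ℂ) (w : ℝ) :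
    inner2 v (x + (w:ℂ) * (y - x)) = inner2 v x + w * (inner2 v y - inner2 v x) := by
  simp [inner2, Complex.add_re, Complex.add_im, Complex.mul_re, Complex.mul_im,
    Complex.sub_re, Complex.sub_im]
  ring

lemma inner2_perp (z : ℂ) : inner2 (Complex.I * z) z = 0 := by
  simp [inner2, Complex.mul_re, Complex.mul_im]; ring

lemma inner2_sub' (v x y : ℂ) : inner2 v (x - y) = inner2 v x - inner2 v y := by
  simp [inner2, Complex.sub_re, Complex.sub_im]; ring

lemma exists_real_smul (w u : ℂ) (hw : w ≠ 0) (h : w.re * u.im - w.im * u.re = 0) :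
    ∃ r : ℝ, u = (r : ℂ) * w := by
  by_cases hre : w.re = 0
  · have him : w.im ≠ 0 := fun h2 => hw (Complex.ext hre h2)
    refine ⟨u.im / w.im, ?_⟩
    have hure : u.re = 0 := by
      have h3 : w.im * u.re = 0 := by rw [hre] at h; linarith
      rcases mul_eq_zero.mp h3 with h' | h'
      · exact absurd h' him
      · exact h'
    apply Complex.ext <;>
      simp [Complex.mul_re, Complex.mul_im, Complex.ofReal_re, Complex.ofReal_im, hure, hre]
    field_simp
  · refine ⟨u.re / w.re, ?_⟩
    apply Complex.ext
    · simp [Complex.mul_re, Complex.mul_im, Complex.ofReal_re, Complex.ofReal_im]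
      field_simp
    · simp [Complex.mul_re, Complex.mul_im, Complex.ofReal_re, Complex.ofReal_im]
      field_simp
      linear_combination h

lemma collinear_of_inner2 (x y z : ℂ) (h : inner2 (Complex.I * (x - y)) (x - z) = 0) :
    Collinear ℝ ({x, y, z} : Set ℂ) := by
  by_cases hxy : x = y
  · subst hxy
    have h2 : ({x, x, z} : Set ℂ) = {x, z} := by simp
    rw [h2]; exact collinear_pair ℝ x z
  · have hw0 : x - y ≠ 0 := sub_ne_zero.mpr hxy
    have hcross : (x - y).re * (x - z).im - (x - y).im * (x - z).re = 0 := by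
      simp only [inner2, Complex.mul_re, Complex.mul_im, Complex.I_re, Complex.I_im] at h
      linarith
    obtain ⟨r, hr⟩ := exists_real_smul (x - y) (x - z) hw0 hcross
    rw [collinear_iff_of_mem (Set.mem_insert x {y, z})]
    refine ⟨x - y, ?_⟩
    rintro p hp
    rcases hp with rfl | rfl | hp
    · exact ⟨0, by simp⟩
    · refine ⟨-1, ?_⟩
      show _ = _ • _ + _
      rw [Complex.real_smul]; push_cast; ring
    · rw [Set.mem_singleton_iff] at hp
      subst hp
      refine ⟨-r, ?_⟩
      show _ = _ • _ + _
      rw [Complex.real_smul]; push_cast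
      linear_combination -hr

section Main
variable (d s t : ℕ) (a : ℕ → ℂ)


lemma c_st_eq : inner2 (Complex.I * (a s - a t)) (a t) = inner2 (Complex.I * (a s - a t)) (a s) := by
  have h := inner2_perp (a s - a t)
  rw [inner2_sub'] at h
  linarith

lemma eval_pP_root (hst : s ≠ t) (ht : t < d) {m : ℕ} (hm : m < d) :
    (pP d s t a).eval (inner2 (Complex.I * (a s - a t)) (a m)) = 0 := by
  by_cases hms : m = s
  · rw [pP, eval_prod]
    apply Finset.prod_eq_zero (i := t)
      (Finset.mem_erase.mpr ⟨Ne.symm hst, Finset.mem_range.mpr ht⟩)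
    rw [hms]
    simp [c_st_eq]
  · rw [pP, eval_prod]
    apply Finset.prod_eq_zero (i := m)
      (Finset.mem_erase.mpr ⟨hms, Finset.mem_range.mpr hm⟩)
    simp

lemma deriv_eval_denom (hst : s ≠ t) (ht : t < d) :
    (pP d s t a).derivative.eval (inner2 (Complex.I * (a s - a t)) (a s)) =
      ∏ k ∈ (((Finset.range d).erase s).erase t),
        (inner2 (Complex.I * (a s - a t)) (a s) - inner2 (Complex.I * (a s - a t)) (a k)) := by
  have htmem : t ∈ (Finset.range d).erase s :=
    Finset.mem_erase.mpr ⟨Ne.symm hst, Finset.mem_range.mpr ht⟩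
  have hsplit : pP d s t a =
      (X - C (inner2 (Complex.I * (a s - a t)) (a t))) *
        ∏ k ∈ (((Finset.range d).erase s).erase t),
          (X - C (inner2 (Complex.I * (a s - a t)) (a k))) :=
    (Finset.mul_prod_erase _ _ htmem).symm
  rw [hsplit, derivative_mul, eval_add, eval_mul, eval_mul]
  simp [c_st_eq, eval_prod]

lemma deriv_eval_double {m n : ℕ} (hm : m ∈ (Finset.range d).erase s)
    (hn : n ∈ (Finset.range d).erase s) (hmn : m ≠ n) {w₀ : ℝ}
    (hw1 : inner2 (Complex.I * (a s - a t)) (a m) = w₀)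
    (hw2 : inner2 (Complex.I * (a s - a t)) (a n) = w₀) :
    (pP d s t a).derivative.eval w₀ = 0 := by
  have hn' : n ∈ ((Finset.range d).erase s).erase m :=
    Finset.mem_erase.mpr ⟨Ne.symm hmn, hn⟩
  have hsplit : pP d s t a =
      (X - C (inner2 (Complex.I * (a s - a t)) (a m))) *
        ((X - C (inner2 (Complex.I * (a s - a t)) (a n))) *
          ∏ k ∈ ((((Finset.range d).erase s).erase m).erase n),
            (X - C (inner2 (Complex.I * (a s - a t)) (a k)))) := by
    rw [pP, ← Finset.mul_prod_erase _ _ hm, ← Finset.mul_prod_erase _ _ hn']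
  rw [hsplit, derivative_mul, eval_add, eval_mul, eval_mul]
  simp [hw1, hw2]

lemma denom_ne_zero (hgen : GenPos d a) (hs : s < d) (ht : t < d) (hst : s ≠ t) :
    (pP d s t a).derivative.eval (inner2 (Complex.I * (a s - a t)) (a s)) ≠ 0 := by
  rw [deriv_eval_denom d s t a hst ht]
  apply Finset.prod_ne_zero_iff.mpr
  intro k hk
  rw [Finset.mem_erase, Finset.mem_erase, Finset.mem_range] at hk
  obtain ⟨hkt, hks, hkd⟩ := hk
  intro h0
  have h1 : inner2 (Complex.I * (a s - a t)) (a s - a k) = 0 := by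
    rw [inner2_sub']; linarith
  exact hgen s t k hs ht hkd hst (Ne.symm hkt) (Ne.symm hks) (collinear_of_inner2 _ _ _ h1)

lemma seg_inner (u v : ℕ) (w : ℝ) :
    inner2 (Complex.I * (a s - a t)) (a u + (w:ℂ) * (a v - a u)) =
      inner2 (Complex.I * (a s - a t)) (a u) +
        w * (inner2 (Complex.I * (a s - a t)) (a v) - inner2 (Complex.I * (a s - a t)) (a u)) :=
  inner2_affine _ _ _ _

lemma key_one (hgen : GenPos d a) (hs : s < d) (ht : t < d) (hst : s ≠ t) :
    ∫ w in (0:ℝ)..1, Qst d s t a (a s + (w:ℂ) * (a t - a s)) = 1 := by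
  have h1 : ∀ w : ℝ, Qst d s t a (a s + (w:ℂ) * (a t - a s)) = 1 := by
    intro w
    rw [Qst, seg_inner, c_st_eq]
    simp only [sub_self, mul_zero, add_zero]
    exact div_self (by rw [deriv_hPoly]; exact denom_ne_zero d s t a hgen hs ht hst)
  simp only [h1]
  simp

lemma key_zero (hgen : GenPos d a) (hs : s < d) (ht : t < d) (hst : s ≠ t)
    (u v : ℕ) (hu : u < d) (hv : v < d) (huv : u ≠ v)
    (h1 : ¬(s = u ∧ t = v)) (h2 : ¬(s = v ∧ t = u)) :
    ∫ w in (0:ℝ)..1, Qst d s t a (a u + (w:ℂ) * (a v - a u)) = 0 := by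
  set cu := inner2 (Complex.I * (a s - a t)) (a u) with hcu
  set cv := inner2 (Complex.I * (a s - a t)) (a v) with hcv
  set q := (pP d s t a).derivative with hq
  set D := (pP d s t a).derivative.eval (inner2 (Complex.I * (a s - a t)) (a s)) with hD
  have hQ : ∀ w : ℝ, Qst d s t a (a u + (w:ℂ) * (a v - a u)) =
      q.eval (cu + w * (cv - cu)) / D := by
    intro w
    rw [Qst, seg_inner, deriv_hPoly, deriv_hPoly]
  simp only [hQ]
  rw [intervalIntegral.integral_div]
  suffices hnum : (∫ w in (0:ℝ)..1, q.eval (cu + w * (cv - cu))) = 0 by rw [hnum, zero_div]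
  by_cases hβ : cv - cu = 0
  · -- constant integrand, double root
    have hval : q.eval cu = 0 := by
      have hcveq : cv = cu := by linarith [sub_eq_zero.mp hβ]
      by_cases hus : u = s
      · -- w₀ = cu = c s = c t ; double roots at t and v
        have htv : t ≠ v := fun h => h1 ⟨hus.symm, h⟩
        have hvs : v ≠ s := fun h => huv (hus.trans h.symm)
        apply deriv_eval_double d s t a
          (m := t) (n := v)
          (Finset.mem_erase.mpr ⟨Ne.symm hst, Finset.mem_range.mpr ht⟩)
          (Finset.mem_erase.mpr ⟨hvs, Finset.mem_range.mpr hv⟩) htv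
        · rw [c_st_eq, hcu, hus]
        · exact hcveq
      · by_cases hvs : v = s
        · -- w₀ = cu = cv = c s = c t ; double roots at t and u
          have htu : t ≠ u := fun h => h2 ⟨hvs.symm, h⟩
          apply deriv_eval_double d s t a
            (m := t) (n := u)
            (Finset.mem_erase.mpr ⟨Ne.symm hst, Finset.mem_range.mpr ht⟩)
            (Finset.mem_erase.mpr ⟨hus, Finset.mem_range.mpr hu⟩) htu
          · rw [c_st_eq, ← hcveq, hcv, hvs]
          · rfl
        · apply deriv_eval_double d s t a
            (m := u) (n := v)
            (Finset.mem_erase.mpr ⟨hus, Finset.mem_range.mpr hu⟩)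
            (Finset.mem_erase.mpr ⟨hvs, Finset.mem_range.mpr hv⟩) huv
          · rfl
          · exact hcveq
    simp only [hβ, mul_zero, add_zero, hval]
    simp
  · -- substitution / FTC
    have hder : ∀ w ∈ Set.uIcc (0:ℝ) 1,
        HasDerivAt (fun w : ℝ => (pP d s t a).eval (cu + w * (cv - cu)) / (cv - cu))
          (q.eval (cu + w * (cv - cu))) w := by
      intro w _
      have haff : HasDerivAt (fun w : ℝ => cu + w * (cv - cu)) (cv - cu) w := by
        simpa using ((hasDerivAt_id w).mul_const (cv - cu)).const_add cu
      have h3 := ((pP d s t a).hasDerivAt (cu + w * (cv - cu))).comp w haff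
      have h4 := h3.div_const (cv - cu)
      simpa [mul_div_assoc, mul_div_cancel_right₀ _ hβ] using h4
    have hcont : Continuous fun w : ℝ => q.eval (cu + w * (cv - cu)) :=
      (Polynomial.continuous q).comp (by continuity)
    rw [intervalIntegral.integral_eq_sub_of_hasDerivAt hder (hcont.intervalIntegrable _ _)]
    have e1 : cu + 1 * (cv - cu) = cv := by ring
    have e0 : cu + 0 * (cv - cu) = cu := by ring
    rw [e1, e0, hcu, hcv, eval_pP_root d s t a hst ht hv, eval_pP_root d s t a hst ht hu]
    simp

end Main
section Main2
variable (d s t : ℕ) (a : ℕ → ℂ)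

lemma cont_Qseg (u v : ℕ) :
    Continuous fun w : ℝ => Qst d s t a (a u + (w:ℂ) * (a v - a u)) := by
  have he : (fun w : ℝ => Qst d s t a (a u + (w:ℂ) * (a v - a u))) =
      fun w : ℝ => (pP d s t a).derivative.eval
          (inner2 (Complex.I * (a s - a t)) (a u) +
            w * (inner2 (Complex.I * (a s - a t)) (a v) -
              inner2 (Complex.I * (a s - a t)) (a u))) /
        (pP d s t a).derivative.eval (inner2 (Complex.I * (a s - a t)) (a s)) := by
    funext w; rw [Qst, seg_inner, deriv_hPoly, deriv_hPoly]
  rw [he]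
  exact (((pP d s t a).derivative.continuous).comp (by continuity)).div_const _

end Main2

lemma mv_eval_aeval (q : Polynomial ℝ) (P : MvPolynomial (Fin 2) ℝ) (pt : Fin 2 → ℝ) :
    MvPolynomial.eval pt (Polynomial.aeval P q) = q.eval (MvPolynomial.eval pt P) := by
  have h1 : MvPolynomial.eval pt (Polynomial.aeval P q) =
      MvPolynomial.aeval pt (Polynomial.aeval P q) := by
    rw [← MvPolynomial.coe_aeval_eq_eval]; rfl
  rw [h1, ← Polynomial.aeval_algHom_apply (MvPolynomial.aeval pt) P q]
  rw [← MvPolynomial.coe_aeval_eq_eval]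
  exact congrFun (Polynomial.coe_aeval_eq_eval _) q

lemma totalDegree_aeval_le (q : Polynomial ℝ) (P : MvPolynomial (Fin 2) ℝ)
    (hP : P.totalDegree ≤ 1) :
    (Polynomial.aeval P q).totalDegree ≤ q.natDegree := by
  rw [Polynomial.aeval_def, Polynomial.eval₂_eq_sum, Polynomial.sum]
  refine le_trans (MvPolynomial.totalDegree_finset_sum _ _) (Finset.sup_le fun e he => ?_)
  calc (MvPolynomial.C (q.coeff e) * P ^ e).totalDegree
      ≤ (MvPolynomial.C (q.coeff e) : MvPolynomial (Fin 2) ℝ).totalDegree +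
          (P ^ e).totalDegree := MvPolynomial.totalDegree_mul _ _
    _ ≤ 0 + e * P.totalDegree := by
        rw [MvPolynomial.totalDegree_C]
        exact add_le_add le_rfl (MvPolynomial.totalDegree_pow _ _)
    _ ≤ e * 1 := by rw [zero_add]; exact Nat.mul_le_mul_left e hP
    _ ≤ q.natDegree := by rw [mul_one]; exact Polynomial.le_natDegree_of_mem_supp e he

lemma totalDegree_lin_le (α β : ℝ) :
    (MvPolynomial.C α * MvPolynomial.X 0 + MvPolynomial.C β * MvPolynomial.X 1 :
      MvPolynomial (Fin 2) ℝ).totalDegree ≤ 1 := by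
  refine le_trans (MvPolynomial.totalDegree_add _ _) (max_le ?_ ?_) <;>
  · refine le_trans (MvPolynomial.totalDegree_mul _ _) ?_
    rw [MvPolynomial.totalDegree_C, MvPolynomial.totalDegree_X]

lemma natDegree_pP_le (d s t : ℕ) (a : ℕ → ℂ) (hs : s < d) :
    (pP d s t a).derivative.natDegree ≤ d - 2 := by
  have h1 : (pP d s t a).natDegree = d - 1 := by
    rw [pP, Polynomial.natDegree_prod]
    · simp only [Polynomial.natDegree_X_sub_C]
      rw [Finset.sum_const, smul_eq_mul, mul_one,
        Finset.card_erase_of_mem (Finset.mem_range.mpr hs), Finset.card_range]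
    · intro i _; exact Polynomial.X_sub_C_ne_zero _
  calc (pP d s t a).derivative.natDegree ≤ (pP d s t a).natDegree - 1 :=
        Polynomial.natDegree_derivative_le _
    _ = d - 2 := by rw [h1, Nat.sub_sub]

end AuxStmt4

open Polynomial in
theorem stmt4 (d : ℕ) (hd : 2 ≤ d) (a : ℕ → ℂ) (hgen : GenPos d a)
    (f : ℂ → ℝ)
    (hf : ContinuousOn f (convexHull ℝ {z : ℂ | ∃ m < d, a m = z}))
    (H : ℂ → ℝ)
    (hH : H = fun x => ∑ s ∈ Finset.range d, ∑ t ∈ Finset.Ico (s + 1) d,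
      Qst d s t a x * ∫ w in (0:ℝ)..1, f (a s + (w : ℂ) * (a t - a s))) :
    (∃ p : MvPolynomial (Fin 2) ℝ, p.totalDegree ≤ d - 2 ∧
        ∀ x : ℂ, H x = MvPolynomial.eval ![x.re, x.im] p) ∧
      ∀ u v : ℕ, u < v → v < d →
        ∫ w in (0:ℝ)..1, H (a u + (w : ℂ) * (a v - a u)) =
          ∫ w in (0:ℝ)..1, f (a u + (w : ℂ) * (a v - a u)) := by
  constructor
  · refine ⟨∑ s ∈ Finset.range d, ∑ t ∈ Finset.Ico (s + 1) d,
      MvPolynomial.C ((∫ w in (0:ℝ)..1, f (a s + (w : ℂ) * (a t - a s))) /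
          (pP d s t a).derivative.eval (inner2 (Complex.I * (a s - a t)) (a s))) *
        Polynomial.aeval
          (MvPolynomial.C ((Complex.I * (a s - a t)).re) * MvPolynomial.X 0 +
            MvPolynomial.C ((Complex.I * (a s - a t)).im) * MvPolynomial.X 1)
          (pP d s t a).derivative, ?_, ?_⟩
    · refine le_trans (MvPolynomial.totalDegree_finset_sum _ _) (Finset.sup_le fun s hs => ?_)
      refine le_trans (MvPolynomial.totalDegree_finset_sum _ _) (Finset.sup_le fun t ht => ?_)
      refine le_trans (MvPolynomial.totalDegree_mul _ _) ?_
      rw [MvPolynomial.totalDegree_C, zero_add]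
      exact le_trans (totalDegree_aeval_le _ _ (totalDegree_lin_le _ _))
        (natDegree_pP_le d s t a (Finset.mem_range.mp hs))
    · intro x
      rw [hH, map_sum]
      refine Finset.sum_congr rfl fun s hs => ?_
      rw [map_sum]
      refine Finset.sum_congr rfl fun t ht => ?_
      rw [map_mul, MvPolynomial.eval_C, mv_eval_aeval]
      have hL : MvPolynomial.eval ![x.re, x.im]
          (MvPolynomial.C ((Complex.I * (a s - a t)).re) * MvPolynomial.X 0 +
            MvPolynomial.C ((Complex.I * (a s - a t)).im) * MvPolynomial.X 1) =
          inner2 (Complex.I * (a s - a t)) x := by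
        simp [inner2]
      rw [hL]
      unfold Qst
      rw [deriv_hPoly, deriv_hPoly]
      ring
  · intro u v huv hvd
    have hud : u < d := huv.trans hvd
    have e1 : (∫ w in (0:ℝ)..1, H (a u + (w:ℂ) * (a v - a u)))
        = ∑ s ∈ Finset.range d, ∑ t ∈ Finset.Ico (s + 1) d,
            (∫ w in (0:ℝ)..1, Qst d s t a (a u + (w:ℂ) * (a v - a u))) *
              ∫ w in (0:ℝ)..1, f (a s + (w:ℂ) * (a t - a s)) := by
      rw [hH]
      beta_reduce
      rw [intervalIntegral.integral_finset_sum (f := fun s (w : ℝ) => ∑ t ∈ Finset.Ico (s + 1) d,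
          Qst d s t a (a u + (w:ℂ) * (a v - a u)) * ∫ w in (0:ℝ)..1, f (a s + (w:ℂ) * (a t - a s)))
        (fun s _ =>
        (continuous_finset_sum _ fun t _ =>
          (cont_Qseg d s t a u v).mul continuous_const).intervalIntegrable _ _)]
      refine Finset.sum_congr rfl fun s hs => ?_
      rw [intervalIntegral.integral_finset_sum (f := fun t (w : ℝ) =>
          Qst d s t a (a u + (w:ℂ) * (a v - a u)) * ∫ w in (0:ℝ)..1, f (a s + (w:ℂ) * (a t - a s)))
        (fun t _ =>
        ((cont_Qseg d s t a u v).mul continuous_const).intervalIntegrable _ _)]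
      refine Finset.sum_congr rfl fun t ht => ?_
      exact intervalIntegral.integral_mul_const _ _
    have e2 : ∀ s ∈ Finset.range d, ∀ t ∈ Finset.Ico (s + 1) d,
        (∫ w in (0:ℝ)..1, Qst d s t a (a u + (w:ℂ) * (a v - a u))) *
            (∫ w in (0:ℝ)..1, f (a s + (w:ℂ) * (a t - a s))) =
          if s = u ∧ t = v then (∫ w in (0:ℝ)..1, f (a u + (w:ℂ) * (a v - a u))) else 0 := by
      intro s hs t ht
      rw [Finset.mem_range] at hs; rw [Finset.mem_Ico] at ht
      by_cases hc : s = u ∧ t = v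
      · obtain ⟨rfl, rfl⟩ := hc
        rw [if_pos ⟨rfl, rfl⟩, key_one d s t a hgen hs ht.2 (by omega), one_mul]
      · rw [if_neg hc, key_zero d s t a hgen hs ht.2 (by omega) u v hud hvd (by omega) hc
          (by rintro ⟨rfl, rfl⟩; omega), zero_mul]
    rw [e1, Finset.sum_congr rfl (fun s hs => Finset.sum_congr rfl (fun t ht => e2 s hs t ht))]
    rw [Finset.sum_eq_single_of_mem u (Finset.mem_range.mpr hud)]
    · rw [Finset.sum_eq_single_of_mem v (Finset.mem_Ico.mpr ⟨huv, hvd⟩)]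
      · simp
      · intro t ht htv
        simp [htv]
    · intro s hs hsu
      apply Finset.sum_eq_zero
      intro t ht
      simp [hsu]
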